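/- arXiv:2309.06267 — 2 statements merged into one kernel-verified Lean document; each statement's English description precedes it below -/
import Mathlib

section
/- Let A be a countable alphabet, P a probability distribution on A, and D a proper and almost surely complete dictionary over A. Let β be any finite string over A such that no string of D of length strictly less than |β| is a prefix of β. Then ∑_{α ∈ (D,β)} P(α) = P(β), where (D,β) = {α ∈ D : β is a prefix of α}. -/
open scoped ENNReal
open Filter

/-- The probability of a finite string, obtained by extending the
distribution `P` multiplicatively: `P(a₁⋯aₙ) = ∏ᵢ P(aᵢ)`. -/
noncomputable def strProb {A : Type*} (P : PMF A) (l : List A) : ℝ≥0∞ :=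
  (l.map fun a => P a).prod

/-- A dictionary is a set of nonempty finite strings. -/
def IsDictionary {A : Type*} (D : Set (List A)) : Prop :=
  ∀ α ∈ D, α ≠ []

/-- A dictionary is proper if no string in it is a (proper) prefix of
another string in it. -/
def IsProper {A : Type*} (D : Set (List A)) : Prop :=
  ∀ α ∈ D, ∀ β ∈ D, α <+: β → α = β

/-- A dictionary is complete if every infinite sequence over `A` has a
prefix in it. -/
def IsCompleteDict {A : Type*} (D : Set (List A)) : Prop :=
  ∀ x : ℕ → A, ∃ α ∈ D, α = (List.range α.length).map x

/-- The probability that the length-`n` prefix of a random infinite sequence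
has some prefix belonging to `D`. -/
noncomputable def prefixProb {A : Type*} (P : PMF A) (D : Set (List A)) (n : ℕ) : ℝ≥0∞ :=
  ∑' γ : {γ : List A // γ.length = n ∧ ∃ β ∈ D, β <+: γ}, strProb P γ

/-- `D` is almost surely complete: under the infinite product measure `P^ℕ`,
the event that an infinite sequence has a prefix in `D` has probability `1`.
(By continuity from below, this probability is the limit, as `n → ∞`, of the
probability that the length-`n` prefix has a prefix in `D`.) -/
def IsASC {A : Type*} (P : PMF A) (D : Set (List A)) : Prop :=
  Tendsto (prefixProb P D) atTop (nhds 1)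

/-- `Tset D n` = strings of length `n` having no prefix in `D`. -/
def Tset {A : Type*} (D : Set (List A)) (n : ℕ) : Set (List A) :=
  {α | α.length = n ∧ ∀ β ∈ D, ¬ β <+: α}

/-- `Dperp D n = {α ∈ D : |α| = n} ∪ Tₙ`. -/
def Dperp {A : Type*} (D : Set (List A)) (n : ℕ) : Set (List A) :=
  {α ∈ D | α.length = n} ∪ Tset D n

/-- `Dn D n = {α ∈ D : |α| < n} ∪ Dₙ^⊥`. -/
def Dn {A : Type*} (D : Set (List A)) (n : ℕ) : Set (List A) :=
  {α ∈ D | α.length < n} ∪ Dperp D n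

/-- The one-letter extensions `αA = {αa : a ∈ A}` of a string `α`. -/
def oneExt {A : Type*} (α : List A) : Set (List A) :=
  {l | ∃ a : A, l = α ++ [a]}

/-- The extension `D[α] = (D \ {α}) ∪ αA` of a dictionary at `α`. -/
def extendDict {A : Type*} (D : Set (List A)) (α : List A) : Set (List A) :=
  (D \ {α}) ∪ oneExt α

/-- The nonnegative entropy contribution `-p log₂ p ∈ [0,∞]` of a
probability value `p`. -/
noncomputable def entTerm (p : ℝ≥0∞) : ℝ≥0∞ :=
  ENNReal.ofReal (-(p.toReal * Real.logb 2 p.toReal))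

/-- The entropy `H(E) = -∑_{α∈E} P(α) log₂ P(α)` of a dictionary, in `[0,∞]`. -/
noncomputable def dictEntropy {A : Type*} (P : PMF A) (E : Set (List A)) : ℝ≥0∞ :=
  ∑' α : E, entTerm (strProb P α)

/-- The average length `l̄(E) = ∑_{α∈E} P(α)|α|` of a dictionary, in `[0,∞]`. -/
noncomputable def avgLen {A : Type*} (P : PMF A) (E : Set (List A)) : ℝ≥0∞ :=
  ∑' α : E, strProb P α * (α : List A).length

/-- The source entropy `H(P) = -∑_{a∈A} P(a) log₂ P(a)`, in `[0,∞]`. -/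
noncomputable def srcEntropy {A : Type*} (P : PMF A) : ℝ≥0∞ :=
  ∑' a : A, entTerm (P a)

/- ## Auxiliary lemmas -/

section Aux

open scoped Classical

variable {A : Type*} (P : PMF A)

lemma strProb_nil : strProb P [] = 1 := rfl

lemma strProb_cons (a : A) (l : List A) : strProb P (a :: l) = P a * strProb P l := by
  simp [strProb]

lemma strProb_append (l₁ l₂ : List A) : strProb P (l₁ ++ l₂) = strProb P l₁ * strProb P l₂ := by
  simp [strProb]

/-- Length-(n+1) strings are a letter followed by a length-n string. -/
def consEquiv (A : Type*) (n : ℕ) :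
    A × {l : List A // l.length = n} ≃ {l : List A // l.length = n + 1} where
  toFun x := ⟨x.1 :: x.2.1, by simp [x.2.2]⟩
  invFun l := (l.1.head (by intro h; have := l.2; simp [h] at this),
    ⟨l.1.tail, by have := l.2; cases l' : l.1 with
      | nil => simp [l'] at this
      | cons a t => simp [l'] at this ⊢; omega⟩)
  left_inv := by rintro ⟨a, l, h⟩; simp
  right_inv := by
    rintro ⟨l, h⟩
    cases l with
    | nil => simp at h
    | cons a t => simp

lemma tsum_strProb_len (n : ℕ) : ∑' δ : {l : List A // l.length = n}, strProb P δ.1 = 1 := by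
  induction n with
  | zero =>
    rw [tsum_eq_single (⟨[], rfl⟩ : {l : List A // l.length = 0})]
    · rfl
    · rintro ⟨l, h⟩ hne
      exact absurd (Subtype.ext (List.length_eq_zero_iff.mp h)) hne
  | succ n ih =>
    rw [← (consEquiv A n).tsum_eq]
    have : ∀ x : A × {l : List A // l.length = n},
        strProb P ((consEquiv A n) x).1 = P x.1 * strProb P x.2.1 := by
      rintro ⟨a, l, h⟩; simp [consEquiv, strProb_cons]
    rw [tsum_congr this]
    rw [ENNReal.tsum_prod (f := fun (a : A) (l : {l : List A // l.length = n}) =>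
      P a * strProb P l.1)]
    simp_rw [ENNReal.tsum_mul_left, ih, mul_one]
    exact P.tsum_coe

/-- Length-n extensions of `β` are `β` followed by a string of length `n - |β|`. -/
def appendEquiv {A : Type*} (β : List A) (n : ℕ) (hn : β.length ≤ n) :
    {l : List A // l.length = n - β.length} ≃ ↑{γ : List A | γ.length = n ∧ β <+: γ} where
  toFun l := ⟨β ++ l.1, by simp [l.2]; omega⟩
  invFun γ := ⟨γ.1.drop β.length, by have := γ.2.1; simp [this]⟩
  left_inv := by rintro ⟨l, h⟩; simp
  right_inv := by
    rintro ⟨γ, hlen, t, rfl⟩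
    simp

/-- The total probability of length-`n` extensions of `β` is `P(β)`. -/
lemma tsum_indicator_ext (β : List A) (n : ℕ) (hn : β.length ≤ n) :
    ∑' γ : List A, Set.indicator {γ : List A | γ.length = n ∧ β <+: γ} (strProb P) γ
      = strProb P β := by
  rw [← tsum_subtype]
  rw [← (appendEquiv β n hn).tsum_eq]
  have : ∀ l : {l : List A // l.length = n - β.length},
      strProb P ((appendEquiv β n hn) l).1 = strProb P β * strProb P l.1 := by
    rintro ⟨l, h⟩; simp [appendEquiv, strProb_append]
  rw [tsum_congr this, ENNReal.tsum_mul_left, tsum_strProb_len, mul_one]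

variable {D : Set (List A)} {β : List A}

lemma unique_pref (hprop : IsProper D) {α₁ α₂ γ : List A} (h1 : α₁ ∈ D) (h2 : α₂ ∈ D)
    (p1 : α₁ <+: γ) (p2 : α₂ <+: γ) : α₁ = α₂ := by
  rcases List.prefix_or_prefix_of_prefix p1 p2 with h | h
  · exact hprop _ h1 _ h2 h
  · exact (hprop _ h2 _ h1 h).symm

/-- The double counting kernel. -/
noncomputable def hAux (P : PMF A) (D : Set (List A)) (β : List A) (n : ℕ)
    (α γ : List A) : ℝ≥0∞ :=
  if α ∈ D ∧ β <+: α ∧ α <+: γ ∧ γ.length = n then strProb P γ else 0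

/-- Double counting: the probability of length-`n` extensions of `β` having a
prefix in `D` equals the total probability of words of `D` extending `β` of
length at most `n`. -/
lemma key_swap (hprop : IsProper D)
    (hβ : ∀ γ ∈ D, γ.length < β.length → ¬ γ <+: β) (n : ℕ) :
    ∑' γ : List A, Set.indicator
        {γ : List A | γ.length = n ∧ (∃ α ∈ D, α <+: γ) ∧ β <+: γ} (strProb P) γ
      = ∑' α : List A, Set.indicator
        {α : List A | α ∈ D ∧ β <+: α ∧ α.length ≤ n} (strProb P) α := by
  have hbetale : ∀ {α γ : List A}, α ∈ D → α <+: γ → β <+: γ → β <+: α := by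
    intro α γ hα hp hbγ
    rcases List.prefix_or_prefix_of_prefix hp hbγ with h | h
    · rcases lt_or_ge α.length β.length with hl | hl
      · exact absurd h (hβ α hα hl)
      · rw [h.eq_of_length (le_antisymm h.length_le hl)]
    · exact h
  have step1 : ∀ γ, ∑' α : List A, hAux P D β n α γ
      = Set.indicator {γ : List A | γ.length = n ∧ (∃ α ∈ D, α <+: γ) ∧ β <+: γ}
          (strProb P) γ := by
    intro γ
    by_cases hγ : γ.length = n ∧ (∃ α ∈ D, α <+: γ) ∧ β <+: γ
    · obtain ⟨hlen, ⟨α₀, hα₀D, hα₀p⟩, hbγ⟩ := hγ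
      rw [Set.indicator_of_mem (show γ ∈ {γ : List A | γ.length = n ∧ (∃ α ∈ D, α <+: γ)
        ∧ β <+: γ} from ⟨hlen, ⟨α₀, hα₀D, hα₀p⟩, hbγ⟩)]
      rw [tsum_eq_single α₀]
      · unfold hAux
        rw [if_pos ⟨hα₀D, hbetale hα₀D hα₀p hbγ, hα₀p, hlen⟩]
      · intro α hne
        unfold hAux
        rw [if_neg]
        rintro ⟨hαD, -, hαp, -⟩
        exact hne (unique_pref hprop hαD hα₀D hαp hα₀p)
    · rw [Set.indicator_of_notMem (show γ ∉ {γ : List A | γ.length = n ∧ (∃ α ∈ D, α <+: γ)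
          ∧ β <+: γ} from hγ), ENNReal.tsum_eq_zero]
      intro α
      unfold hAux
      rw [if_neg]
      rintro ⟨hαD, hbα, hαp, hlen⟩
      exact hγ ⟨hlen, ⟨α, hαD, hαp⟩, hbα.trans hαp⟩
  have step2 : ∀ α, ∑' γ : List A, hAux P D β n α γ
      = Set.indicator {α : List A | α ∈ D ∧ β <+: α ∧ α.length ≤ n} (strProb P) α := by
    intro α
    by_cases hα : α ∈ D ∧ β <+: α ∧ α.length ≤ n
    · rw [Set.indicator_of_mem (show α ∈ {α : List A | α ∈ D ∧ β <+: α ∧ α.length ≤ n}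
          from hα)]
      have : ∀ γ, hAux P D β n α γ
          = Set.indicator {γ : List A | γ.length = n ∧ α <+: γ} (strProb P) γ := by
        intro γ
        by_cases hc : γ.length = n ∧ α <+: γ
        · rw [Set.indicator_of_mem (show γ ∈ {γ : List A | γ.length = n ∧ α <+: γ} from hc)]
          unfold hAux
          exact if_pos ⟨hα.1, hα.2.1, hc.2, hc.1⟩
        · rw [Set.indicator_of_notMem
              (show γ ∉ {γ : List A | γ.length = n ∧ α <+: γ} from hc)]
          unfold hAux
          rw [if_neg]
          rintro ⟨-, -, h1, h2⟩
          exact hc ⟨h2, h1⟩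
      rw [tsum_congr this, tsum_indicator_ext P α n hα.2.2]
    · rw [Set.indicator_of_notMem (show α ∉ {α : List A | α ∈ D ∧ β <+: α ∧ α.length ≤ n}
          from hα), ENNReal.tsum_eq_zero]
      intro γ
      unfold hAux
      rw [if_neg]
      rintro ⟨h1, h2, h3, h4⟩
      exact hα ⟨h1, h2, h4 ▸ h3.length_le⟩
  calc ∑' γ : List A, Set.indicator
        {γ : List A | γ.length = n ∧ (∃ α ∈ D, α <+: γ) ∧ β <+: γ} (strProb P) γ
      = ∑' γ : List A, ∑' α : List A, hAux P D β n α γ := (tsum_congr step1).symm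
    _ = ∑' α : List A, ∑' γ : List A, hAux P D β n α γ :=
        ENNReal.tsum_comm (f := fun γ α => hAux P D β n α γ)
    _ = _ := tsum_congr step2

end Aux

/-- If `D` is proper and almost surely complete and no string
of `D` of length `< |β|` is a prefix of `β`, then `∑_{α ∈ (D,β)} P(α) = P(β)`. -/
theorem tsum_strProb_prefixSet_eq {A : Type*} [Countable A] (P : PMF A)
    (D : Set (List A)) (hdict : IsDictionary D) (hprop : IsProper D)
    (hasc : IsASC P D) (β : List A)
    (hβ : ∀ γ ∈ D, γ.length < β.length → ¬ γ <+: β) :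
    ∑' α : {α ∈ D | β <+: α}, strProb P (α : List A) = strProb P β := by
  classical
  set g : List A → ℝ≥0∞ := strProb P with hg
  have hW : ∑' α : {α ∈ D | β <+: α}, strProb P (α : List A)
      = ∑' α : List A, Set.indicator {α : List A | α ∈ D ∧ β <+: α} g α :=
    tsum_subtype {α : List A | α ∈ D ∧ β <+: α} g
  rw [hW]
  set S := ∑' α : List A, Set.indicator {α : List A | α ∈ D ∧ β <+: α} g α with hS
  -- sets
  have hmono : ∀ (s t : Set (List A)), s ⊆ t →
      (∑' α : List A, Set.indicator s g α) ≤ ∑' α : List A, Set.indicator t g α := by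
    intro s t hst
    exact ENNReal.tsum_le_tsum fun α =>
      Set.indicator_le_indicator_of_subset hst (fun a => zero_le) α
  -- Part 1 : S ≤ g β
  have part1 : S ≤ g β := by
    rw [hS]
    refine Summable.tsum_le_of_sum_le ENNReal.summable fun F => ?_
    set n : ℕ := max β.length (F.sup List.length) with hn
    have hβn : β.length ≤ n := le_max_left _ _
    have h1 : ∀ α ∈ F, Set.indicator {α : List A | α ∈ D ∧ β <+: α} g α
        ≤ Set.indicator {α : List A | α ∈ D ∧ β <+: α ∧ α.length ≤ n} g α := by
      intro α hα
      by_cases hmem : α ∈ {α : List A | α ∈ D ∧ β <+: α}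
      · rw [Set.indicator_of_mem hmem, Set.indicator_of_mem]
        exact ⟨hmem.1, hmem.2, le_trans (Finset.le_sup (f := List.length) hα) (le_max_right _ _)⟩
      · rw [Set.indicator_of_notMem hmem]; exact zero_le
    calc ∑ α ∈ F, Set.indicator {α : List A | α ∈ D ∧ β <+: α} g α
        ≤ ∑ α ∈ F, Set.indicator {α : List A | α ∈ D ∧ β <+: α ∧ α.length ≤ n} g α :=
          Finset.sum_le_sum h1
      _ ≤ ∑' α : List A, Set.indicator {α : List A | α ∈ D ∧ β <+: α ∧ α.length ≤ n} g α :=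
          ENNReal.sum_le_tsum F
      _ = ∑' γ : List A, Set.indicator
            {γ : List A | γ.length = n ∧ (∃ α ∈ D, α <+: γ) ∧ β <+: γ} g γ :=
          (key_swap P hprop hβ n).symm
      _ ≤ ∑' γ : List A, Set.indicator {γ : List A | γ.length = n ∧ β <+: γ} g γ :=
          hmono _ _ (fun γ hγ => ⟨hγ.1, hγ.2.2⟩)
      _ = g β := tsum_indicator_ext P β n hβn
  -- Tset mass
  have hTset : ∀ n : ℕ, prefixProb P D n
      + (∑' γ : List A, Set.indicator (Tset D n) g γ) = 1 := by
    intro n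
    have hpp : prefixProb P D n
        = ∑' γ : List A, Set.indicator {γ : List A | γ.length = n ∧ ∃ β ∈ D, β <+: γ} g γ :=
      tsum_subtype {γ : List A | γ.length = n ∧ ∃ β ∈ D, β <+: γ} g
    rw [hpp, ← ENNReal.tsum_add]
    have : ∀ γ : List A,
        Set.indicator {γ : List A | γ.length = n ∧ ∃ β ∈ D, β <+: γ} g γ
          + Set.indicator (Tset D n) g γ
        = Set.indicator {γ : List A | γ.length = n ∧ ([] : List A) <+: γ} g γ := by
      intro γ
      by_cases hlen : γ.length = n
      · by_cases hex : ∃ β ∈ D, β <+: γ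
        · rw [Set.indicator_of_mem (show γ ∈ {γ : List A | γ.length = n ∧ ∃ β ∈ D, β <+: γ}
            from ⟨hlen, hex⟩), Set.indicator_of_notMem (show γ ∉ Tset D n from by
              rintro ⟨-, hall⟩
              obtain ⟨δ, hδ, hp⟩ := hex
              exact hall δ hδ hp),
            Set.indicator_of_mem (show γ ∈ {γ : List A | γ.length = n ∧ ([] : List A) <+: γ}
              from ⟨hlen, List.nil_prefix⟩), add_zero]
        · rw [Set.indicator_of_notMem (show γ ∉ {γ : List A | γ.length = n ∧ ∃ β ∈ D, β <+: γ}
            from fun h => hex h.2),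
            Set.indicator_of_mem (show γ ∈ Tset D n from
              ⟨hlen, fun δ hδ hp => hex ⟨δ, hδ, hp⟩⟩),
            Set.indicator_of_mem (show γ ∈ {γ : List A | γ.length = n ∧ ([] : List A) <+: γ}
              from ⟨hlen, List.nil_prefix⟩), zero_add]
      · rw [Set.indicator_of_notMem (fun h => hlen h.1),
          Set.indicator_of_notMem (show γ ∉ Tset D n from fun h => hlen h.1),
          Set.indicator_of_notMem (show γ ∉ {γ : List A | γ.length = n ∧ ([] : List A) <+: γ}
            from fun h => hlen h.1), add_zero]
    rw [tsum_congr this, tsum_indicator_ext P [] n (by simp)]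
    rfl
  have hTsub : ∀ n : ℕ, (∑' γ : List A, Set.indicator (Tset D n) g γ)
      = 1 - prefixProb P D n := by
    intro n
    refine ENNReal.eq_sub_of_add_eq ?_ ?_
    · exact ne_top_of_le_ne_top ENNReal.one_ne_top (le_of_add_le_left (le_of_eq (hTset n)))
    · rw [add_comm]; exact hTset n
  have hTtend : Tendsto (fun n => ∑' γ : List A, Set.indicator (Tset D n) g γ)
      atTop (nhds 0) := by
    have : Tendsto (fun n => 1 - prefixProb P D n) atTop (nhds (1 - 1)) :=
      ENNReal.Tendsto.sub tendsto_const_nhds hasc (Or.inl ENNReal.one_ne_top)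
    rw [tsub_self] at this
    exact this.congr fun n => (hTsub n).symm
  -- Part 2 : g β ≤ S
  have part2 : g β ≤ S := by
    have hstep : ∀ n : ℕ, β.length ≤ n →
        g β ≤ S + ∑' γ : List A, Set.indicator (Tset D n) g γ := by
      intro n hn
      have hsplit : g β
          = (∑' γ : List A, Set.indicator
              {γ : List A | γ.length = n ∧ (∃ α ∈ D, α <+: γ) ∧ β <+: γ} g γ)
            + ∑' γ : List A, Set.indicator
              {γ : List A | γ.length = n ∧ β <+: γ ∧ ∀ δ ∈ D, ¬ δ <+: γ} g γ := by
        simp only [hg]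
        rw [← ENNReal.tsum_add, ← tsum_indicator_ext P β n hn]
        refine tsum_congr fun γ => ?_
        by_cases hmem : γ.length = n ∧ β <+: γ
        · by_cases hex : ∃ α ∈ D, α <+: γ
          · rw [Set.indicator_of_mem (show γ ∈ {γ : List A | γ.length = n ∧ β <+: γ}
                from hmem),
              Set.indicator_of_mem (show γ ∈ {γ : List A | γ.length = n ∧ (∃ α ∈ D, α <+: γ)
                ∧ β <+: γ} from ⟨hmem.1, hex, hmem.2⟩),
              Set.indicator_of_notMem (show γ ∉ {γ : List A | γ.length = n ∧ β <+: γ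
                ∧ ∀ δ ∈ D, ¬ δ <+: γ} from by
                  rintro ⟨-, -, hall⟩
                  obtain ⟨δ, hδ, hp⟩ := hex
                  exact hall δ hδ hp), add_zero]
          · rw [Set.indicator_of_mem (show γ ∈ {γ : List A | γ.length = n ∧ β <+: γ}
                from hmem),
              Set.indicator_of_notMem (show γ ∉ {γ : List A | γ.length = n ∧ (∃ α ∈ D, α <+: γ)
                ∧ β <+: γ} from fun h => hex h.2.1),
              Set.indicator_of_mem (show γ ∈ {γ : List A | γ.length = n ∧ β <+: γ
                ∧ ∀ δ ∈ D, ¬ δ <+: γ} from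
                  ⟨hmem.1, hmem.2, fun δ hδ hp => hex ⟨δ, hδ, hp⟩⟩), zero_add]
        · rw [Set.indicator_of_notMem
              (show γ ∉ {γ : List A | γ.length = n ∧ β <+: γ} from hmem),
            Set.indicator_of_notMem (show γ ∉ {γ : List A | γ.length = n ∧ (∃ α ∈ D, α <+: γ)
              ∧ β <+: γ} from fun h => hmem ⟨h.1, h.2.2⟩),
            Set.indicator_of_notMem (show γ ∉ {γ : List A | γ.length = n ∧ β <+: γ
              ∧ ∀ δ ∈ D, ¬ δ <+: γ} from fun h => hmem ⟨h.1, h.2.1⟩), add_zero]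
      rw [hsplit]
      refine add_le_add ?_ ?_
      · calc ∑' γ : List A, Set.indicator
              {γ : List A | γ.length = n ∧ (∃ α ∈ D, α <+: γ) ∧ β <+: γ} g γ
            = ∑' α : List A, Set.indicator
              {α : List A | α ∈ D ∧ β <+: α ∧ α.length ≤ n} g α := key_swap P hprop hβ n
          _ ≤ S := hmono _ _ (fun α hα => ⟨hα.1, hα.2.1⟩)
      · exact hmono _ _ (fun γ hγ => ⟨hγ.1, hγ.2.2⟩)
    have htend : Tendsto (fun n => S + ∑' γ : List A, Set.indicator (Tset D n) g γ)
        atTop (nhds (S + 0)) :=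
      Tendsto.const_add S hTtend
    rw [add_zero] at htend
    exact ge_of_tendsto htend (eventually_atTop.mpr ⟨β.length, fun n hn => hstep n hn⟩)
  exact le_antisymm part1 part2
end

section
/- Let A be a countable alphabet, P a probability distribution on A with finite source entropy H(P) = -∑_{a∈A} P(a) log₂ P(a), S a proper dictionary over A, and α ∈ S. Then the entropy of the extended dictionary satisfies H(S[α]) = H(S) + P(α)·H(P), where H(S) = -∑_{β∈S} P(β) log₂ P(β) and the sums are taken in [0,∞]. -/
open scoped ENNReal
open Filter

lemma strProb_le_one {A : Type*} (P : PMF A) (l : List A) : strProb P l ≤ 1 := by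
  induction l with
  | nil => simp [strProb]
  | cons a l ih =>
    rw [strProb, List.map_cons, List.prod_cons]
    exact mul_le_one' (PMF.coe_le_one P a) ih

lemma entTerm_mul (p q : ℝ≥0∞) (hp1 : p ≤ 1) (hq1 : q ≤ 1) :
    entTerm (p * q) = q * entTerm p + p * entTerm q := by
  have hp : p ≠ ⊤ := ne_top_of_le_ne_top ENNReal.one_ne_top hp1
  have hq : q ≠ ⊤ := ne_top_of_le_ne_top ENNReal.one_ne_top hq1
  rcases eq_or_ne p 0 with rfl | hp0
  · simp [entTerm]
  rcases eq_or_ne q 0 with rfl | hq0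
  · simp [entTerm]
  have hx : 0 < p.toReal := ENNReal.toReal_pos hp0 hp
  have hy : 0 < q.toReal := ENNReal.toReal_pos hq0 hq
  have hx1 : p.toReal ≤ 1 := by
    rw [← ENNReal.toReal_one]; exact ENNReal.toReal_mono ENNReal.one_ne_top hp1
  have hy1 : q.toReal ≤ 1 := by
    rw [← ENNReal.toReal_one]; exact ENNReal.toReal_mono ENNReal.one_ne_top hq1
  have hlx : Real.logb 2 p.toReal ≤ 0 := Real.logb_nonpos one_lt_two hx.le hx1
  have hly : Real.logb 2 q.toReal ≤ 0 := Real.logb_nonpos one_lt_two hy.le hy1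
  have h1 : 0 ≤ -(p.toReal * Real.logb 2 p.toReal) :=
    neg_nonneg.mpr (mul_nonpos_of_nonneg_of_nonpos hx.le hlx)
  have h2 : 0 ≤ -(q.toReal * Real.logb 2 q.toReal) :=
    neg_nonneg.mpr (mul_nonpos_of_nonneg_of_nonpos hy.le hly)
  rw [entTerm, entTerm, entTerm, ENNReal.toReal_mul, Real.logb_mul hx.ne' hy.ne']
  have key : -(p.toReal * q.toReal * (Real.logb 2 p.toReal + Real.logb 2 q.toReal))
      = q.toReal * (-(p.toReal * Real.logb 2 p.toReal))
        + p.toReal * (-(q.toReal * Real.logb 2 q.toReal)) := by ring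
  rw [key, ENNReal.ofReal_add (mul_nonneg hy.le h1) (mul_nonneg hx.le h2),
    ENNReal.ofReal_mul hy.le, ENNReal.ofReal_mul hx.le,
    ENNReal.ofReal_toReal hq, ENNReal.ofReal_toReal hp]

lemma strProb_append_singleton {A : Type*} (P : PMF A) (α : List A) (a : A) :
    strProb P (α ++ [a]) = strProb P α * P a := by
  simp [strProb]

lemma tsum_oneExt {A : Type*} [Countable A] (P : PMF A) (α : List A) :
    ∑' β : oneExt α, entTerm (strProb P β)
      = entTerm (strProb P α) + strProb P α * srcEntropy P := by
  have hinj : Function.Injective (fun a : A => α ++ [a]) := by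
    intro a b h; simpa using h
  have hrange : oneExt α = Set.range (fun a : A => α ++ [a]) := by
    ext l; simp [oneExt, Set.range, eq_comm]
  rw [hrange, tsum_range (fun β => entTerm (strProb P β)) hinj]
  have : ∀ a : A, entTerm (strProb P (α ++ [a]))
      = P a * entTerm (strProb P α) + strProb P α * entTerm (P a) := by
    intro a
    rw [strProb_append_singleton]
    exact entTerm_mul _ _ (strProb_le_one P α) (PMF.coe_le_one P a)
  simp only [this]
  rw [ENNReal.tsum_add, ENNReal.tsum_mul_right, ENNReal.tsum_mul_left, P.tsum_coe,
    one_mul, srcEntropy]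

/-- For a proper dictionary `S` and `α ∈ S`, if the source
entropy is finite then `H(S[α]) = H(S) + P(α)·H(P)`. -/
theorem dictEntropy_extendDict {A : Type*} [Countable A] (P : PMF A)
    (hH : srcEntropy P < ⊤) (S : Set (List A)) (hdict : IsDictionary S)
    (hprop : IsProper S) (α : List A) (hα : α ∈ S) :
    dictEntropy P (extendDict S α)
      = dictEntropy P S + strProb P α * srcEntropy P := by
  have hdisj : Disjoint (S \ {α}) (oneExt α) := by
    rw [Set.disjoint_left]
    rintro β ⟨hβS, hβα⟩ ⟨a, rfl⟩
    have := hprop α hα _ hβS (by exact ⟨[a], rfl⟩)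
    simpa using congrArg List.length this
  have h1 : dictEntropy P (extendDict S α)
      = (∑' β : ↥(S \ {α}), entTerm (strProb P β))
        + ∑' β : oneExt α, entTerm (strProb P β) := by
    rw [dictEntropy, extendDict]
    exact Summable.tsum_union_disjoint (f := fun β => entTerm (strProb P β)) hdisj
      ENNReal.summable ENNReal.summable
  have hdisj2 : Disjoint (S \ {α}) ({α} : Set (List A)) :=
    Set.disjoint_left.mpr fun β hβ hβ' => hβ.2 hβ'
  have h2 : dictEntropy P S
      = (∑' β : ↥(S \ {α}), entTerm (strProb P β)) + entTerm (strProb P α) := by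
    rw [dictEntropy]
    have hS : S = (S \ {α}) ∪ {α} :=
      (Set.diff_union_of_subset (Set.singleton_subset_iff.mpr hα)).symm
    conv_lhs => rw [hS]
    rw [Summable.tsum_union_disjoint (f := fun β => entTerm (strProb P β)) hdisj2
      ENNReal.summable ENNReal.summable,
      tsum_singleton α (fun β => entTerm (strProb P β))]
  rw [h1, tsum_oneExt, h2, add_assoc]
end
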